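/- Let k ≥ 2, let M be a symmetric k×k matrix over the field ℤ/2 with all diagonal entries zero, and let α ≠ β be two indices. Let A be the matrix M with its (α,β) and (β,α) entries set to 1, and B the matrix M with those entries set to 0. Let E = 1 + e_{βα} (the identity matrix plus the matrix unit with a single 1 in position (β,α)), let C = E·A·Eᵀ, and let D be the matrix C with its (α,β) and (β,α) entries set to 0 (equivalently, D = E·B·Eᵀ). Then the genus generating polynomials satisfy the four-term relation F_A − F_B = F_C − F_D. (This expresses that the generating function for the genera of checkerboard-colourable embeddings of a framed 4-valent graph satisfies the four-term relation, i.e. is a weight system on the algebra of chord diagrams and on the graph algebra.) -/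

import Mathlib

open Matrix

/-- The corank over `ℤ/2` of the principal submatrix of `N` on the rows and columns in `I`:
`|I| - rank N_I`. -/
noncomputable def subCorank {V : Type*} [Fintype V] [DecidableEq V]
    (N : Matrix V V (ZMod 2)) (I : Finset V) : ℕ :=
  I.card - (N.submatrix (fun i : I => (i : V)) fun i : I => (i : V)).rank

/-- The genus generating polynomial of a symmetric matrix `N` over `ℤ/2`
(with integer coefficients, so that differences make sense):
`F_N(x) = Σ_{I ⊆ V} x ^ (corank N_I + corank N_{V∖I})`. -/
noncomputable def genusPoly {V : Type*} [Fintype V] [DecidableEq V]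
    (N : Matrix V V (ZMod 2)) : Polynomial ℤ :=
  ∑ I : Finset V, Polynomial.X ^ (subCorank N I + subCorank N Iᶜ)

/-- The matrix `M` with its `(α, β)` and `(β, α)` entries replaced by `v`. -/
def setSym {V : Type*} [DecidableEq V] (M : Matrix V V (ZMod 2)) (α β : V) (v : ZMod 2) :
    Matrix V V (ZMod 2) := fun i j =>
  if (i = α ∧ j = β) ∨ (i = β ∧ j = α) then v else M i j

section AuxLemmas

variable {n : Type*} [Fintype n] [DecidableEq n]

/-- Entrywise description of `(1 + e_{ba}) N (1 + e_{ba})ᵀ`. -/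
lemma conj_apply (N : Matrix n n (ZMod 2)) (a b : n) (i j : n) :
    (((1 + single b a 1 : Matrix n n (ZMod 2)) * N
        * (1 + single b a 1 : Matrix n n (ZMod 2))ᵀ) : Matrix n n (ZMod 2)) i j
      = N i j + (if i = b then N a j else 0) + (if j = b then N i a else 0)
        + (if i = b then (if j = b then N a a else 0) else 0) := by
  have ht : (single b a (1:ZMod 2))ᵀ = single a b 1 := by
    ext x y
    simp [single, and_comm]
  rw [add_mul, one_mul, transpose_add, transpose_one, ht, mul_add, mul_one, add_mul]
  have h1 : (single b a (1:ZMod 2) * N) i j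
      = if i = b then N a j else 0 := by
    by_cases h : i = b
    · subst h; simp
    · simp [h, Matrix.single_mul_apply_of_ne _ _ _ _ _ h]
  have h2 : (N * single a b (1:ZMod 2)) i j = if j = b then N i a else 0 := by
    by_cases h : j = b
    · subst h; simp
    · simp [h, Matrix.mul_single_apply_of_ne _ _ _ _ _ h]
  have h3 : (single b a (1:ZMod 2) * (N * single a b (1:ZMod 2))) i j
      = if i = b then (if j = b then N a a else 0) else 0 := by
    by_cases h : i = b
    · rw [if_pos h, h, Matrix.single_mul_apply_same, one_mul]
      by_cases hj : j = b
      · rw [if_pos hj, hj, Matrix.mul_single_apply_same, mul_one]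
      · rw [if_neg hj, Matrix.mul_single_apply_of_ne _ _ _ _ _ hj]
    · simp [h, Matrix.single_mul_apply_of_ne _ _ _ _ _ h]
  simp only [Matrix.add_apply, mul_assoc]
  rw [h1, h2, h3]
  ring

lemma EE_eq_one {a b : n} (hab : a ≠ b) :
    (1 + single b a (1:ZMod 2)) * (1 + single b a 1) = 1 := by
  have h0 : single b a (1:ZMod 2) * single b a 1 = 0 :=
    Matrix.single_mul_single_of_ne _ _ _ _ hab _
  have h1 : single b a (1:ZMod 2) + single b a 1 = 0 := by
    rw [← Matrix.single_add]
    norm_num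
    exact Matrix.single_zero b a
  rw [add_mul, one_mul, mul_add, mul_one, h0, add_zero, add_assoc, h1, add_zero]

lemma rank_conj (N : Matrix n n (ZMod 2)) {a b : n} (hab : a ≠ b) :
    ((1 + single b a (1:ZMod 2)) * N * (1 + single b a 1)ᵀ).rank = N.rank := by
  have hd : IsUnit ((1 : Matrix n n (ZMod 2)) + single b a 1).det :=
    IsUnit.of_mul_eq_one _ (by rw [← Matrix.det_mul, EE_eq_one hab, Matrix.det_one])
  have hdt : IsUnit ((1 : Matrix n n (ZMod 2)) + single b a 1)ᵀ.det := by
    rwa [Matrix.det_transpose]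
  rw [Matrix.rank_mul_eq_left_of_isUnit_det _ _ hdt, Matrix.rank_mul_eq_right_of_isUnit_det _ _ hd]

end AuxLemmas

section SubCorankLemmas

variable {V : Type*} [Fintype V] [DecidableEq V]

lemma subCorank_congr {N N' : Matrix V V (ZMod 2)} {I : Finset V}
    (h : ∀ i ∈ I, ∀ j ∈ I, N i j = N' i j) : subCorank N I = subCorank N' I := by
  unfold subCorank
  congr 2
  ext i j
  simp only [Matrix.submatrix_apply]
  exact h i i.2 j j.2

lemma subCorank_conj (N : Matrix V V (ZMod 2)) {a b : V} (hab : a ≠ b) {I : Finset V}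
    (ha : a ∈ I) (hb : b ∈ I) :
    subCorank ((1 + single b a 1 : Matrix V V (ZMod 2)) * N
      * (1 + single b a 1 : Matrix V V (ZMod 2))ᵀ) I = subCorank N I := by
  set a' : I := ⟨a, ha⟩
  set b' : I := ⟨b, hb⟩
  have hab' : a' ≠ b' := fun h => hab (Subtype.ext_iff.mp h)
  unfold subCorank
  congr 1
  have key : (((1 + single b a 1 : Matrix V V (ZMod 2)) * N
        * (1 + single b a 1 : Matrix V V (ZMod 2))ᵀ).submatrix
          (fun i : I => (i : V)) (fun i : I => (i : V)))
      = (1 + single b' a' 1 : Matrix I I (ZMod 2))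
          * (N.submatrix (fun i : I => (i : V)) (fun i : I => (i : V)))
          * (1 + single b' a' 1 : Matrix I I (ZMod 2))ᵀ := by
    ext i j
    rw [Matrix.submatrix_apply, conj_apply, conj_apply]
    simp only [Matrix.submatrix_apply, Subtype.ext_iff]
    try rfl
  rw [key, rank_conj _ hab']

omit [Fintype V] in
lemma setSym_apply_ne {N : Matrix V V (ZMod 2)} {α β : V} {v : ZMod 2} {i j : V}
    (h : (i ≠ α ∧ j ≠ α) ∨ (i ≠ β ∧ j ≠ β)) : setSym N α β v i j = N i j := by
  unfold setSym
  rcases h with ⟨h1, h2⟩ | ⟨h1, h2⟩ <;>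
    · rw [if_neg]
      rintro (⟨rfl, rfl⟩ | ⟨rfl, rfl⟩) <;> simp_all

end SubCorankLemmas

/-- **The four-term relation for the genus generating polynomial.**
Let `M` be a symmetric `k × k` matrix over `ℤ/2` (`k ≥ 2`) with zero diagonal, `α ≠ β`
two indices, `A` the matrix `M` with its `(α,β)`, `(β,α)` entries set to `1`, `B` the
matrix `M` with those entries set to `0`, `E = 1 + e_{βα}`, `C = E·A·Eᵀ` and `D` the
matrix `C` with its `(α,β)`, `(β,α)` entries set to `0`.  Then
`F_A - F_B = F_C - F_D`. -/
theorem genusPoly_four_term (k : ℕ) (hk : 2 ≤ k)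
    (M : Matrix (Fin k) (Fin k) (ZMod 2)) (hM : M.IsSymm) (hdiag : ∀ i, M i i = 0)
    (α β : Fin k) (hαβ : α ≠ β) :
    let A := setSym M α β 1
    let B := setSym M α β 0
    let E := (1 : Matrix (Fin k) (Fin k) (ZMod 2)) + Matrix.single β α 1
    let C := E * A * Eᵀ
    let D := setSym C α β 0
    genusPoly A - genusPoly B = genusPoly C - genusPoly D := by
  intro A B E C D
  have hβα : β ≠ α := hαβ.symm
  have hC : C = (1 + single β α 1 : Matrix (Fin k) (Fin k) (ZMod 2)) * A
      * (1 + single β α 1 : Matrix (Fin k) (Fin k) (ZMod 2))ᵀ := rfl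
  have hD : D = setSym C α β 0 := rfl
  -- The key identity `D = E B Eᵀ`.
  have hDB : D = (1 + single β α 1 : Matrix (Fin k) (Fin k) (ZMod 2)) * B
      * (1 + single β α 1 : Matrix (Fin k) (Fin k) (ZMod 2))ᵀ := by
    ext i j
    rw [conj_apply B α β i j, hD]
    show (if (i = α ∧ j = β) ∨ (i = β ∧ j = α) then (0 : ZMod 2) else C i j) = _
    rw [hC, conj_apply A α β i j]
    show (if (i = α ∧ j = β) ∨ (i = β ∧ j = α) then (0 : ZMod 2) else _) = _
    by_cases hiα : i = α <;> by_cases hiβ : i = β <;> by_cases hjα : j = α <;>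
      by_cases hjβ : j = β <;>
      simp_all [setSym, A, B, hαβ, hβα, hdiag] <;> decide
  clear hD
  have eAB : ∀ i j : Fin k, ((i ≠ α ∧ j ≠ α) ∨ (i ≠ β ∧ j ≠ β)) → A i j = B i j := by
    intro i j h
    show setSym M α β 1 i j = setSym M α β 0 i j
    rw [setSym_apply_ne h, setSym_apply_ne h]
  have eDC : ∀ i j : Fin k, ((i ≠ α ∧ j ≠ α) ∨ (i ≠ β ∧ j ≠ β)) → D i j = C i j := by
    intro i j h
    show setSym C α β 0 i j = C i j
    rw [setSym_apply_ne h]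
  unfold genusPoly
  rw [← Finset.sum_sub_distrib, ← Finset.sum_sub_distrib]
  refine Finset.sum_congr rfl fun I _ => ?_
  by_cases hα : α ∈ I <;> by_cases hβ : β ∈ I
  · -- both `α, β ∈ I` : coranks of `C, D` on `I` agree with `A, B` by congruence,
    -- and on `Iᶜ` all entries agree.
    have hβc : β ∉ Iᶜ := by simp [hβ]
    have e1 : subCorank C I = subCorank A I := by rw [hC]; exact subCorank_conj A hαβ hα hβ
    have e2 : subCorank D I = subCorank B I := by rw [hDB]; exact subCorank_conj B hαβ hα hβ
    have e3 : subCorank C Iᶜ = subCorank A Iᶜ := by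
      refine subCorank_congr fun i hi j hj => ?_
      have hi' : i ≠ β := fun h => hβc (h ▸ hi)
      have hj' : j ≠ β := fun h => hβc (h ▸ hj)
      rw [hC, conj_apply A α β i j, if_neg hi', if_neg hj', if_neg hi']
      ring
    have e4 : subCorank D Iᶜ = subCorank B Iᶜ := by
      refine subCorank_congr fun i hi j hj => ?_
      have hi' : i ≠ β := fun h => hβc (h ▸ hi)
      have hj' : j ≠ β := fun h => hβc (h ▸ hj)
      rw [hDB, conj_apply B α β i j, if_neg hi', if_neg hj', if_neg hi']
      ring
    rw [e1, e2, e3, e4]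
  · -- `α ∈ I`, `β ∉ I` : all four pairs of coranks agree, both sides vanish.
    have e1 : subCorank A I = subCorank B I :=
      subCorank_congr fun i hi j hj =>
        eAB i j (Or.inr ⟨fun h => hβ (h ▸ hi), fun h => hβ (h ▸ hj)⟩)
    have e2 : subCorank A Iᶜ = subCorank B Iᶜ :=
      subCorank_congr fun i hi j hj =>
        eAB i j (Or.inl ⟨fun h => (Finset.mem_compl.mp hi) (h ▸ hα),
          fun h => (Finset.mem_compl.mp hj) (h ▸ hα)⟩)
    have e3 : subCorank C I = subCorank D I :=
      (subCorank_congr fun i hi j hj =>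
        eDC i j (Or.inr ⟨fun h => hβ (h ▸ hi), fun h => hβ (h ▸ hj)⟩)).symm
    have e4 : subCorank C Iᶜ = subCorank D Iᶜ :=
      (subCorank_congr fun i hi j hj =>
        eDC i j (Or.inl ⟨fun h => (Finset.mem_compl.mp hi) (h ▸ hα),
          fun h => (Finset.mem_compl.mp hj) (h ▸ hα)⟩)).symm
    rw [e1, e2, e3, e4, sub_self, sub_self]
  · -- `α ∉ I`, `β ∈ I` : all four pairs of coranks agree, both sides vanish.
    have e1 : subCorank A I = subCorank B I :=
      subCorank_congr fun i hi j hj =>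
        eAB i j (Or.inl ⟨fun h => hα (h ▸ hi), fun h => hα (h ▸ hj)⟩)
    have e2 : subCorank A Iᶜ = subCorank B Iᶜ :=
      subCorank_congr fun i hi j hj =>
        eAB i j (Or.inr ⟨fun h => (Finset.mem_compl.mp hi) (h ▸ hβ),
          fun h => (Finset.mem_compl.mp hj) (h ▸ hβ)⟩)
    have e3 : subCorank C I = subCorank D I :=
      (subCorank_congr fun i hi j hj =>
        eDC i j (Or.inl ⟨fun h => hα (h ▸ hi), fun h => hα (h ▸ hj)⟩)).symm
    have e4 : subCorank C Iᶜ = subCorank D Iᶜ :=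
      (subCorank_congr fun i hi j hj =>
        eDC i j (Or.inr ⟨fun h => (Finset.mem_compl.mp hi) (h ▸ hβ),
          fun h => (Finset.mem_compl.mp hj) (h ▸ hβ)⟩)).symm
    rw [e1, e2, e3, e4, sub_self, sub_self]
  · -- `α, β ∉ I` : dual of the first case.
    have hαc : α ∈ Iᶜ := Finset.mem_compl.mpr hα
    have hβc : β ∈ Iᶜ := Finset.mem_compl.mpr hβ
    have e1 : subCorank C Iᶜ = subCorank A Iᶜ := by
      rw [hC]; exact subCorank_conj A hαβ hαc hβc
    have e2 : subCorank D Iᶜ = subCorank B Iᶜ := by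
      rw [hDB]; exact subCorank_conj B hαβ hαc hβc
    have e3 : subCorank C I = subCorank A I := by
      refine subCorank_congr fun i hi j hj => ?_
      have hi' : i ≠ β := fun h => hβ (h ▸ hi)
      have hj' : j ≠ β := fun h => hβ (h ▸ hj)
      rw [hC, conj_apply A α β i j, if_neg hi', if_neg hj', if_neg hi']
      ring
    have e4 : subCorank D I = subCorank B I := by
      refine subCorank_congr fun i hi j hj => ?_
      have hi' : i ≠ β := fun h => hβ (h ▸ hi)
      have hj' : j ≠ β := fun h => hβ (h ▸ hj)
      rw [hDB, conj_apply B α β i j, if_neg hi', if_neg hj', if_neg hi']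
      ring
    rw [e1, e2, e3, e4]
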